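/- (Theorem 1, finite-support version) Let A be a finite set, p(·;φ) a differentiable positive distribution on A, ℓ : ℝ^d × A → ℝ differentiable in θ, L : ℝ^d → ℝ differentiable, α > 0, and define the expected update θ'(φ) = θ − α E_{a∼p(·;φ)}[∇_θ ℓ(θ, a)]. Then ∇_φ L(θ'(φ)) = −α E_{a∼p(·;φ)}[ ⟨∇_θ ℓ(θ, a), ∇ L(θ'(φ))⟩ · ∇_φ log p(a;φ) ], i.e. the policy gradient with reward r(a) = ⟨∇_θ ℓ(θ,a), ∇L(θ')⟩, scaled by −α, equals the exact meta-gradient. -/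

import Mathlib

open RealInnerProductSpace

/-- Theorem 1 (finite-support version): with the expected update
`θ'(φ) = θ − α E_{a∼p(·;φ)}[∇_θ ℓ(θ, a)]`, the policy gradient with the
gradient-alignment reward `r(a) = ⟨∇_θ ℓ(θ,a), ∇L(θ'(φ))⟩`, scaled by `−α`,
equals the exact meta-gradient `∇_φ L(θ'(φ))`. -/
theorem gar_policy_gradient_eq_meta_gradient (d m : ℕ) (A : Type) [Fintype A]
    (p : EuclideanSpace ℝ (Fin m) → A → ℝ)
    (hdiff : ∀ a, Differentiable ℝ (fun φ => p φ a))
    (hpos : ∀ φ a, 0 < p φ a)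
    (hsum : ∀ φ, ∑ a, p φ a = 1)
    (ℓ : EuclideanSpace ℝ (Fin d) → A → ℝ)
    (hℓ : ∀ a, Differentiable ℝ (fun θ => ℓ θ a))
    (L : EuclideanSpace ℝ (Fin d) → ℝ) (hL : Differentiable ℝ L)
    (α : ℝ) (hα : 0 < α)
    (θ : EuclideanSpace ℝ (Fin d))
    (θ' : EuclideanSpace ℝ (Fin m) → EuclideanSpace ℝ (Fin d))
    (hθ' : ∀ φ, θ' φ = θ - α • ∑ a, p φ a • gradient (fun θ'' => ℓ θ'' a) θ)
    (φ₀ : EuclideanSpace ℝ (Fin m)) :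
    gradient (fun φ => L (θ' φ)) φ₀
      = (-α) • ∑ a, p φ₀ a •
          (⟪gradient (fun θ'' => ℓ θ'' a) θ, gradient L (θ' φ₀)⟫ •
            gradient (fun φ => Real.log (p φ a)) φ₀) := by
  set g : A → EuclideanSpace ℝ (Fin d) := fun a => gradient (fun θ'' => ℓ θ'' a) θ with hg
  set dp : A → EuclideanSpace ℝ (Fin m) := fun a => gradient (fun φ => p φ a) φ₀ with hdp
  set gL : EuclideanSpace ℝ (Fin d) := gradient L (θ' φ₀) with hgL
  have hpg : ∀ a, HasGradientAt (fun φ => p φ a) (dp a) φ₀ := fun a =>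
    ((hdiff a) φ₀).hasGradientAt
  -- gradient of log p
  have hlog : ∀ a, gradient (fun φ => Real.log (p φ a)) φ₀ = (p φ₀ a)⁻¹ • dp a := by
    intro a
    have h1 : HasFDerivAt (fun φ => Real.log (p φ a))
        ((p φ₀ a)⁻¹ • (InnerProductSpace.toDual ℝ _ (dp a))) φ₀ :=
      ((hpg a).hasFDerivAt).log (ne_of_gt (hpos φ₀ a))
    have h2 : HasGradientAt (fun φ => Real.log (p φ a)) ((p φ₀ a)⁻¹ • dp a) φ₀ := by
      rw [hasGradientAt_iff_hasFDerivAt, map_smul]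
      exact h1
    exact h2.gradient
  -- derivative of θ'
  have hT : HasFDerivAt θ'
      (-(α • ∑ a, (InnerProductSpace.toDual ℝ _ (dp a)).smulRight (g a))) φ₀ := by
    have : HasFDerivAt (fun φ => θ - α • ∑ a, p φ a • g a)
        (-(α • ∑ a, (InnerProductSpace.toDual ℝ _ (dp a)).smulRight (g a))) φ₀ := by
      refine HasFDerivAt.const_sub ?_ θ
      refine HasFDerivAt.const_smul ?_ α
      refine HasFDerivAt.fun_sum fun a _ => ?_
      exact ((hpg a).hasFDerivAt).smul_const (g a)
    have he : θ' = fun φ => θ - α • ∑ a, p φ a • g a := funext fun φ => hθ' φ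
    rw [he]
    exact this
  have hLd : HasFDerivAt L (InnerProductSpace.toDual ℝ _ gL) (θ' φ₀) :=
    ((hL (θ' φ₀)).hasGradientAt).hasFDerivAt
  have hcomp : HasFDerivAt (fun φ => L (θ' φ))
      ((InnerProductSpace.toDual ℝ _ gL).comp
        (-(α • ∑ a, (InnerProductSpace.toDual ℝ _ (dp a)).smulRight (g a)))) φ₀ :=
    hLd.comp φ₀ hT
  have hGeq : (InnerProductSpace.toDual ℝ _ gL).comp
        (-(α • ∑ a, (InnerProductSpace.toDual ℝ _ (dp a)).smulRight (g a)))
      = InnerProductSpace.toDual ℝ _ ((-α) • ∑ a, ⟪g a, gL⟫ • dp a) := by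
    ext v
    simp only [ContinuousLinearMap.comp_apply, ContinuousLinearMap.neg_apply,
      ContinuousLinearMap.smul_apply, ContinuousLinearMap.sum_apply,
      ContinuousLinearMap.smulRight_apply, InnerProductSpace.toDual_apply_apply,
      inner_smul_left, inner_sum, inner_smul_right, map_neg, map_smul, map_sum,
      conj_trivial, neg_smul, smul_eq_mul]
    congr 1
    congr 1
    refine Finset.sum_congr rfl fun a _ => ?_
    rw [real_inner_comm (g a) gL]
    ring
  have hgrad : HasGradientAt (fun φ => L (θ' φ)) ((-α) • ∑ a, ⟪g a, gL⟫ • dp a) φ₀ := by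
    rw [hasGradientAt_iff_hasFDerivAt]
    rw [← hGeq]
    exact hcomp
  rw [hgrad.gradient]
  congr 1
  refine Finset.sum_congr rfl fun a _ => ?_
  rw [hlog a, smul_comm (p φ₀ a), smul_smul (p φ₀ a), mul_inv_cancel₀ (ne_of_gt (hpos φ₀ a)),
    one_smul]
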